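/- Let X and Y be real Hilbert spaces, let T₀, T : X → Y be bounded linear operators with ‖T₀ − T‖ ≤ ε, let v ∈ Y, and set e₀ := T₀* v. Then for every α > 0, with β := ‖α (α I + T*T)^{-1} e₀‖ and γ := ⟨α³ (α I + T T*)^{-3} T e₀, T e₀⟩^{1/2}, one has β² ≤ γ ‖v‖ + β ε ‖v‖; consequently β ≤ (γ ‖v‖)^{1/2} + ε ‖v‖. -/

import Mathlib

open ContinuousLinearMap RealInnerProductSpace Filter

set_option maxHeartbeats 1000000

/-- `(α I + T*T)⁻¹` as an operator on `X` (via `Ring.inverse`; for `α > 0` the operator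
`α I + T*T` is a unit, so this is the genuine inverse). -/
noncomputable def regInvX {X Y : Type*} [NormedAddCommGroup X] [InnerProductSpace ℝ X]
    [CompleteSpace X] [NormedAddCommGroup Y] [InnerProductSpace ℝ Y] [CompleteSpace Y]
    (α : ℝ) (T : X →L[ℝ] Y) : X →L[ℝ] X :=
  Ring.inverse (α • (1 : X →L[ℝ] X) + (adjoint T).comp T)

/-- `(α I + T T*)⁻¹` as an operator on `Y`. -/
noncomputable def regInvY {X Y : Type*} [NormedAddCommGroup X] [InnerProductSpace ℝ X]
    [CompleteSpace X] [NormedAddCommGroup Y] [InnerProductSpace ℝ Y] [CompleteSpace Y]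
    (α : ℝ) (T : X →L[ℝ] Y) : Y →L[ℝ] Y :=
  Ring.inverse (α • (1 : Y →L[ℝ] Y) + T.comp (adjoint T))

section Aux

variable {X Y : Type*} [NormedAddCommGroup X] [InnerProductSpace ℝ X] [CompleteSpace X]
  [NormedAddCommGroup Y] [InnerProductSpace ℝ Y] [CompleteSpace Y]

lemma reg_inner (α : ℝ) (T : X →L[ℝ] Y) (x : X) :
    ⟪(α • (1 : X →L[ℝ] X) + (adjoint T).comp T) x, x⟫ = α * ‖x‖ ^ 2 + ‖T x‖ ^ 2 := by
  simp only [add_apply, smul_apply, ContinuousLinearMap.one_apply, coe_comp', Function.comp_apply,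
    inner_add_left, real_inner_smul_left, real_inner_self_eq_norm_sq, adjoint_inner_left]

lemma reg_lower {α : ℝ} (hα : 0 < α) (T : X →L[ℝ] Y) (x : X) :
    α * ‖x‖ ≤ ‖(α • (1 : X →L[ℝ] X) + (adjoint T).comp T) x‖ := by
  set A := α • (1 : X →L[ℝ] X) + (adjoint T).comp T with hA
  rcases eq_or_ne x 0 with rfl | hx
  · simp
  have h1 : α * ‖x‖ ^ 2 ≤ ⟪A x, x⟫ := by
    rw [hA, reg_inner]; nlinarith [sq_nonneg ‖T x‖]
  have h2 : ⟪A x, x⟫ ≤ ‖A x‖ * ‖x‖ := real_inner_le_norm _ _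
  have hx' : 0 < ‖x‖ := norm_pos_iff.mpr hx
  nlinarith

lemma reg_isUnit {α : ℝ} (hα : 0 < α) (T : X →L[ℝ] Y) :
    IsUnit (α • (1 : X →L[ℝ] X) + (adjoint T).comp T) := by
  set A := α • (1 : X →L[ℝ] X) + (adjoint T).comp T with hA
  have hanti : AntilipschitzWith (Real.toNNReal α)⁻¹ A := by
    apply ContinuousLinearMap.antilipschitz_of_bound
    intro x
    have h := reg_lower hα T x
    rw [NNReal.coe_inv, Real.coe_toNNReal α hα.le]
    calc ‖x‖ = α⁻¹ * (α * ‖x‖) := by field_simp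
    _ ≤ α⁻¹ * ‖A x‖ := by
        exact mul_le_mul_of_nonneg_left h (inv_nonneg.mpr hα.le)
  have hker : LinearMap.ker (A : X →ₗ[ℝ] X) = ⊥ := LinearMap.ker_eq_bot.mpr hanti.injective
  have hclosed : IsClosed (LinearMap.range (A : X →ₗ[ℝ] X) : Set X) :=
    hanti.isClosed_range A.uniformContinuous
  have hrange : LinearMap.range (A : X →ₗ[ℝ] X) = ⊤ := by
    haveI := hclosed.completeSpace_coe
    rw [← (LinearMap.range (A : X →ₗ[ℝ] X)).orthogonal_orthogonal]
    rw [Submodule.eq_top_iff']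
    intro v w mem_w_orthogonal
    obtain rfl : w = 0 := by
      have h0 : ⟪A w, w⟫ = 0 := mem_w_orthogonal _ ⟨w, rfl⟩
      have h1 : α * ‖w‖ ^ 2 ≤ ⟪A w, w⟫ := by
        rw [hA, reg_inner]; nlinarith [sq_nonneg ‖T w‖]
      by_contra hw
      have hpos : 0 < ‖w‖ := norm_pos_iff.mpr hw
      nlinarith [mul_pos hα (mul_pos hpos hpos)]
    exact inner_zero_left _
  exact ⟨(ContinuousLinearEquiv.ofBijective A hker hrange).toUnit, rfl⟩

lemma reg_star (α : ℝ) (T : X →L[ℝ] Y) :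
    star (α • (1 : X →L[ℝ] X) + (adjoint T).comp T)
      = α • (1 : X →L[ℝ] X) + (adjoint T).comp T := by
  rw [star_add, star_smul, star_one, star_trivial,
    ContinuousLinearMap.star_eq_adjoint, adjoint_comp, adjoint_adjoint]

lemma star_Ring_inverse {M : Type*} [MonoidWithZero M] [StarMul M] {a : M} (h : IsUnit a)
    (ha : star a = a) : star (Ring.inverse a) = Ring.inverse a := by
  have h1 : a * Ring.inverse a = 1 := Ring.mul_inverse_cancel a h
  have h3 : star (Ring.inverse a) * a = 1 := by
    calc star (Ring.inverse a) * a = star (Ring.inverse a) * star a := by rw [ha]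
    _ = star (a * Ring.inverse a) := (star_mul a _).symm
    _ = 1 := by rw [h1, star_one]
  calc star (Ring.inverse a) = star (Ring.inverse a) * (a * Ring.inverse a) := by
        rw [h1, mul_one]
  _ = (star (Ring.inverse a) * a) * Ring.inverse a := by rw [mul_assoc]
  _ = Ring.inverse a := by rw [h3, one_mul]

/-- Cauchy–Schwarz for a positive symmetric operator. -/
lemma pos_cauchy_schwarz {E : Type*} [NormedAddCommGroup E] [InnerProductSpace ℝ E]
    (C : E →L[ℝ] E) (hpos : ∀ z, 0 ≤ ⟪C z, z⟫) (hsym : ∀ a b, ⟪C a, b⟫ = ⟪a, C b⟫)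
    (u w : E) : ⟪C u, w⟫ ^ 2 ≤ ⟪C u, u⟫ * ⟪C w, w⟫ := by
  have key : ∀ t : ℝ, 0 ≤ ⟪C w, w⟫ * (t * t) + (2 * ⟪C u, w⟫) * t + ⟪C u, u⟫ := by
    intro t
    have h := hpos (u + t • w)
    have hexp : ⟪C (u + t • w), u + t • w⟫
        = ⟪C w, w⟫ * (t * t) + (2 * ⟪C u, w⟫) * t + ⟪C u, u⟫ := by
      rw [map_add, map_smul]
      rw [inner_add_left, inner_add_right, inner_add_right]
      rw [real_inner_smul_left, real_inner_smul_right, real_inner_smul_right,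
        real_inner_smul_left]
      have hc : ⟪C w, u⟫ = ⟪C u, w⟫ := by
        rw [hsym w u, real_inner_comm]
      rw [hc]; ring
    rw [hexp] at h
    exact h
  have hd := discrim_le_zero key
  rw [discrim] at hd
  nlinarith

end Aux

/-- The key estimate on `β = ‖α (α I + T*T)⁻¹ e₀‖` with `e₀ = T₀* v` and `‖T₀ - T‖ ≤ ε`:
with `γ = ⟨α³ (α I + T T*)⁻³ T e₀, T e₀⟩^{1/2}` one has `β² ≤ γ ‖v‖ + β ε ‖v‖`, and
consequently `β ≤ (γ ‖v‖)^{1/2} + ε ‖v‖` (cf. the estimate (2.12)). -/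
theorem stmt18 {X Y : Type*} [NormedAddCommGroup X] [InnerProductSpace ℝ X] [CompleteSpace X]
    [NormedAddCommGroup Y] [InnerProductSpace ℝ Y] [CompleteSpace Y]
    (T₀ T : X →L[ℝ] Y) (ε : ℝ) (hT : ‖T₀ - T‖ ≤ ε) (v : Y) (α : ℝ) (hα : 0 < α)
    (e₀ : X) (he₀ : e₀ = adjoint T₀ v)
    (β γ : ℝ)
    (hβ : β = ‖α • regInvX α T e₀‖)
    (hγ : γ = Real.sqrt ⟪(α ^ 3 • regInvY α T ^ 3) (T e₀), T e₀⟫) :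
    β ^ 2 ≤ γ * ‖v‖ + β * ε * ‖v‖ ∧ β ≤ Real.sqrt (γ * ‖v‖) + ε * ‖v‖ := by
  have hε : 0 ≤ ε := le_trans (norm_nonneg _) hT
  set A : X →L[ℝ] X := α • (1 : X →L[ℝ] X) + (adjoint T).comp T with hAdef
  set B : Y →L[ℝ] Y := α • (1 : Y →L[ℝ] Y) + T.comp (adjoint T) with hBdef
  have hAunit : IsUnit A := reg_isUnit hα T
  have hBunit : IsUnit B := by
    have h := reg_isUnit hα (adjoint T)
    rwa [adjoint_adjoint] at h
  set A' : X →L[ℝ] X := regInvX α T with hA'def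
  set B' : Y →L[ℝ] Y := regInvY α T with hB'def
  have hAA' : ∀ x, A (A' x) = x := by
    intro x
    have h : A * A' = 1 := Ring.mul_inverse_cancel A hAunit
    calc A (A' x) = (A * A') x := rfl
    _ = x := by rw [h]; rfl
  have hA'A : ∀ x, A' (A x) = x := by
    intro x
    have h : A' * A = 1 := Ring.inverse_mul_cancel A hAunit
    calc A' (A x) = (A' * A) x := rfl
    _ = x := by rw [h]; rfl
  have hBB' : ∀ y, B (B' y) = y := by
    intro y
    have h : B * B' = 1 := Ring.mul_inverse_cancel B hBunit
    calc B (B' y) = (B * B') y := rfl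
    _ = y := by rw [h]; rfl
  have hB'B : ∀ y, B' (B y) = y := by
    intro y
    have h : B' * B = 1 := Ring.inverse_mul_cancel B hBunit
    calc B' (B y) = (B' * B) y := rfl
    _ = y := by rw [h]; rfl
  -- norm bounds for the inverses
  have hA'bound : ∀ y : X, α * ‖A' y‖ ≤ ‖y‖ := by
    intro y
    have h := reg_lower hα T (A' y)
    rw [← hAdef, hAA'] at h
    exact h
  have hB'bound : ∀ y : Y, α * ‖B' y‖ ≤ ‖y‖ := by
    intro y
    have h := reg_lower hα (adjoint T) (B' y)
    rw [adjoint_adjoint, ← hBdef, hBB'] at h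
    exact h
  -- symmetry of A' and B'
  have hAsa : star A = A := reg_star α T
  have hBsa : star B = B := by
    have h := reg_star α (adjoint T)
    rwa [adjoint_adjoint] at h
  have hA'sa : adjoint A' = A' := by
    have := star_Ring_inverse hAunit hAsa
    rwa [ContinuousLinearMap.star_eq_adjoint] at this
  have hB'sa : adjoint B' = B' := by
    have := star_Ring_inverse hBunit hBsa
    rwa [ContinuousLinearMap.star_eq_adjoint] at this
  have hA'sym : ∀ a b : X, ⟪A' a, b⟫ = ⟪a, A' b⟫ := by
    intro a b
    conv_lhs => rw [← hA'sa]
    rw [adjoint_inner_left]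
  have hB'sym : ∀ a b : Y, ⟪B' a, b⟫ = ⟪a, B' b⟫ := by
    intro a b
    conv_lhs => rw [← hB'sa]
    rw [adjoint_inner_left]
  -- positivity of B'
  have hB'pos : ∀ z : Y, 0 ≤ ⟪B' z, z⟫ := by
    intro z
    have h1 : ⟪B' z, z⟫ = ⟪B (B' z), B' z⟫ := by
      rw [real_inner_comm, hBB']
    have h2 : ⟪B (B' z), B' z⟫ = α * ‖B' z‖ ^ 2 + ‖adjoint T (B' z)‖ ^ 2 := by
      have := reg_inner α (adjoint T) (B' z)
      rwa [adjoint_adjoint, ← hBdef] at this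
    rw [h1, h2]
    positivity
  -- intertwining
  have hint : ∀ z : X, T (A' z) = B' (T z) := by
    intro z
    have h1 : B (T (A' z)) = T (A (A' z)) := by
      simp only [hAdef, hBdef, add_apply, smul_apply, ContinuousLinearMap.one_apply, coe_comp',
        Function.comp_apply, map_add, map_smul]
    rw [hAA'] at h1
    calc T (A' z) = B' (B (T (A' z))) := (hB'B _).symm
    _ = B' (T z) := by rw [h1]
  -- main quantities
  set w : X := α • A' e₀ with hwdef
  set x : Y := T e₀ with hxdef
  have hβ0 : 0 ≤ β := by rw [hβ]; exact norm_nonneg _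
  have hwnorm : ‖w‖ = β := hβ.symm
  have hwbound : ‖α • A' w‖ ≤ β := by
    rw [norm_smul, Real.norm_eq_abs, abs_of_pos hα, ← hwnorm]
    exact hA'bound w
  -- γ² = α³ * g3 with g3 = ⟪B'³ x, x⟫ ≥ 0
  set g3 : ℝ := ⟪B' (B' (B' x)), x⟫ with hg3def
  have hg3nonneg : 0 ≤ g3 := by
    have h := hB'pos (B' x)
    have he : ⟪B' (B' x), B' x⟫ = g3 := (hB'sym (B' (B' x)) x).symm
    linarith [he ▸ h]
  have hγval : γ = Real.sqrt (α ^ 3 * g3) := by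
    rw [hγ]
    congr 1
    have hpow : (B' ^ 3) x = B' (B' (B' x)) := by
      show (B' * B' * B') x = _
      rfl
    rw [ContinuousLinearMap.smul_apply, hpow, real_inner_smul_left]
  have hγ0 : 0 ≤ γ := by rw [hγval]; exact Real.sqrt_nonneg _
  have hγsq : γ ^ 2 = α ^ 3 * g3 := by
    rw [hγval, Real.sq_sqrt (by positivity)]
  -- decomposition of β²
  have hsplit : β ^ 2 = ⟪α • A' (adjoint T v), w⟫ + ⟪α • A' ((adjoint T₀ - adjoint T) v), w⟫ := by
    have he : e₀ = adjoint T v + (adjoint T₀ - adjoint T) v := by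
      rw [he₀]; simp
    have hw2 : w = α • A' (adjoint T v) + α • A' ((adjoint T₀ - adjoint T) v) := by
      rw [hwdef]
      conv_lhs => rw [he]
      rw [map_add, smul_add]
    calc β ^ 2 = ⟪w, w⟫ := by rw [← hwnorm, real_inner_self_eq_norm_sq]
    _ = ⟪α • A' (adjoint T v), w⟫ + ⟪α • A' ((adjoint T₀ - adjoint T) v), w⟫ := by
        nth_rewrite 1 [hw2]
        rw [inner_add_left]
  -- second term bound
  have ht2 : ⟪α • A' ((adjoint T₀ - adjoint T) v), w⟫ ≤ β * ε * ‖v‖ := by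
    have h1 : ⟪α • A' ((adjoint T₀ - adjoint T) v), w⟫ = ⟪v, (T₀ - T) (α • A' w)⟫ := by
      rw [real_inner_smul_left, hA'sym, ← real_inner_smul_right]
      have h2 : (adjoint T₀ - adjoint T) v = adjoint (T₀ - T) v := by simp
      rw [h2, adjoint_inner_left]
    rw [h1]
    calc ⟪v, (T₀ - T) (α • A' w)⟫ ≤ ‖v‖ * ‖(T₀ - T) (α • A' w)‖ := real_inner_le_norm _ _
    _ ≤ ‖v‖ * (‖T₀ - T‖ * ‖α • A' w‖) :=
        mul_le_mul_of_nonneg_left (le_opNorm _ _) (norm_nonneg v)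
    _ ≤ ‖v‖ * (ε * β) := by
        apply mul_le_mul_of_nonneg_left _ (norm_nonneg v)
        exact mul_le_mul hT hwbound (norm_nonneg _) hε
    _ = β * ε * ‖v‖ := by ring
  -- first term bound
  have ht1 : ⟪α • A' (adjoint T v), w⟫ ≤ γ * ‖v‖ := by
    have h1 : ⟪α • A' (adjoint T v), w⟫ = α ^ 2 * ⟪B' (B' x), v⟫ := by
      rw [real_inner_smul_left, hA'sym, adjoint_inner_left]
      have hTw : T (A' w) = α • B' (B' x) := by
        rw [hint, hwdef, map_smul, hint, map_smul]
      rw [hTw, real_inner_smul_right, real_inner_comm]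
      ring
    have hcs : ⟪B' (B' x), v⟫ ^ 2 ≤ g3 * (α⁻¹ * ‖v‖ ^ 2) := by
      have h2 := pos_cauchy_schwarz B' hB'pos hB'sym (B' x) v
      have h3 : ⟪B' (B' x), B' x⟫ = g3 := (hB'sym (B' (B' x)) x).symm
      have h4 : ⟪B' v, v⟫ ≤ α⁻¹ * ‖v‖ ^ 2 := by
        calc ⟪B' v, v⟫ ≤ ‖B' v‖ * ‖v‖ := real_inner_le_norm _ _
        _ ≤ (α⁻¹ * ‖v‖) * ‖v‖ := by
            apply mul_le_mul_of_nonneg_right _ (norm_nonneg v)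
            have := hB'bound v
            calc ‖B' v‖ = α⁻¹ * (α * ‖B' v‖) := by field_simp
            _ ≤ α⁻¹ * ‖v‖ := mul_le_mul_of_nonneg_left this (inv_nonneg.mpr hα.le)
        _ = α⁻¹ * ‖v‖ ^ 2 := by ring
      rw [h3] at h2
      calc ⟪B' (B' x), v⟫ ^ 2 ≤ g3 * ⟪B' v, v⟫ := h2
      _ ≤ g3 * (α⁻¹ * ‖v‖ ^ 2) := mul_le_mul_of_nonneg_left h4 hg3nonneg
    rw [h1]
    have h5 : ⟪B' (B' x), v⟫ ≤ Real.sqrt (g3 * (α⁻¹ * ‖v‖ ^ 2)) := by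
      calc ⟪B' (B' x), v⟫ ≤ |⟪B' (B' x), v⟫| := le_abs_self _
      _ = Real.sqrt (⟪B' (B' x), v⟫ ^ 2) := (Real.sqrt_sq_eq_abs _).symm
      _ ≤ Real.sqrt (g3 * (α⁻¹ * ‖v‖ ^ 2)) := Real.sqrt_le_sqrt hcs
    calc α ^ 2 * ⟪B' (B' x), v⟫ ≤ α ^ 2 * Real.sqrt (g3 * (α⁻¹ * ‖v‖ ^ 2)) :=
        mul_le_mul_of_nonneg_left h5 (by positivity)
    _ = γ * ‖v‖ := by
        rw [hγval]
        have e1 : α ^ 2 * Real.sqrt (g3 * (α⁻¹ * ‖v‖ ^ 2))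
            = Real.sqrt ((α ^ 2) ^ 2 * (g3 * (α⁻¹ * ‖v‖ ^ 2))) := by
          conv_rhs => rw [Real.sqrt_mul (by positivity), Real.sqrt_sq (by positivity)]
        have e2 : Real.sqrt (α ^ 3 * g3) * ‖v‖
            = Real.sqrt (α ^ 3 * g3 * ‖v‖ ^ 2) := by
          conv_rhs => rw [Real.sqrt_mul (by positivity), Real.sqrt_sq (norm_nonneg v)]
        rw [e1, e2]
        congr 1
        field_simp
  have hmain : β ^ 2 ≤ γ * ‖v‖ + β * ε * ‖v‖ := by
    rw [hsplit]; linarith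
  refine ⟨hmain, ?_⟩
  -- second conclusion
  set a : ℝ := γ * ‖v‖ with hadef
  set b : ℝ := ε * ‖v‖ with hbdef
  have ha0 : 0 ≤ a := by positivity
  have hb0 : 0 ≤ b := by positivity
  rcases le_or_gt β b with h | h
  · calc β ≤ b := h
    _ ≤ Real.sqrt a + b := by linarith [Real.sqrt_nonneg a]
  · have h1 : (β - b) ^ 2 ≤ a := by nlinarith
    have h2 : β - b ≤ Real.sqrt a := by
      calc β - b = Real.sqrt ((β - b) ^ 2) := (Real.sqrt_sq (by linarith)).symm
      _ ≤ Real.sqrt a := Real.sqrt_le_sqrt h1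
    linarith
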